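/- Let M be a field, L/M an algebraic extension inside a separable closure of M. Suppose that for every finite Galois extension K/M (inside the separable closure) such that Gal(K/M) admits a faithful irreducible complex linear representation, we have K ⊆ L. Then L contains every finite Galois extension of M, i.e. L is the separable closure of M. -/

import Mathlib

set_option maxHeartbeats 1000000

open Representation in
theorem aux_simple_of_invariant {k G V : Type} [Field k] [Group G] [AddCommGroup V] [Module k V]
    (ρ : Representation k G V) (hnt : Nontrivial V)
    (hinv : ∀ p : Submodule k V, (∀ g : G, ∀ x ∈ p, ρ g x ∈ p) → p = ⊥ ∨ p = ⊤) :
    IsSimpleModule (MonoidAlgebra k G) ρ.asModule := by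
  haveI : Nontrivial ρ.asModule := hnt
  have hbt : (⊥ : Submodule (MonoidAlgebra k G) ρ.asModule) ≠ ⊤ := by
    intro h
    obtain ⟨x, hx0⟩ := exists_ne (0 : ρ.asModule)
    exact hx0 (by simpa using (h ▸ Submodule.mem_top : x ∈ (⊥ : Submodule (MonoidAlgebra k G) ρ.asModule)))
  haveI : Nontrivial (Submodule (MonoidAlgebra k G) ρ.asModule) := ⟨⟨⊥, ⊤, hbt⟩⟩
  refine { toIsSimpleOrder := ⟨fun q => ?_⟩ }
  have key : ∀ (c : k) (x : ρ.asModule),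
      (algebraMap k (MonoidAlgebra k G) c) • x = (c • x : V) := by
    intro c x
    show ρ.asAlgebraHom (algebraMap k (MonoidAlgebra k G) c) x = c • x
    rw [AlgHom.commutes]
    exact Module.algebraMap_end_apply k k V c x
  have keyg : ∀ (g : G) (x : ρ.asModule), (MonoidAlgebra.of k G g) • x = ρ g x := by
    intro g x
    show ρ.asAlgebraHom (MonoidAlgebra.of k G g) x = _
    rw [asAlgebraHom_of]
  let p : Submodule k V :=
    { carrier := (q : Set ρ.asModule)
      add_mem' := fun hx hy => q.add_mem hx hy
      zero_mem' := q.zero_mem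
      smul_mem' := fun c x hx => by
        have := q.smul_mem (algebraMap k (MonoidAlgebra k G) c) hx
        exact (congrArg (· ∈ q) (key c x)).mp this }
  rcases hinv p (fun g x hx => by
      have := q.smul_mem (MonoidAlgebra.of k G g) hx
      exact (congrArg (· ∈ q) (keyg g x)).mp this) with h | h
  · left
    ext x
    simp only [Submodule.mem_bot]
    constructor
    · intro hx
      have hxp : x ∈ p := hx
      rw [h] at hxp
      exact (Submodule.mem_bot k).mp hxp
    · rintro rfl; exact q.zero_mem
  · right
    ext x
    simp only [Submodule.mem_top, iff_true]
    have hxp : x ∈ p := by rw [h]; exact Submodule.mem_top (R := k) (M := V)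
    exact hxp

open Representation MonoidAlgebra in
theorem aux_exists_rep {G : Type} [Group G] [Fintype G] (g₀ : G) (hg : g₀ ≠ 1) :
    ∃ (N : Subgroup G) (_ : N.Normal), g₀ ∉ N ∧
      ∀ (Γ : Type) [Group Γ], ∀ _ : Γ ≃* G ⧸ N,
        ∃ (n : ℕ) (ρ : Representation ℂ Γ (Fin n → ℂ)),
          (∀ g, ρ g = LinearMap.id → g = 1) ∧
          IsSimpleModule (MonoidAlgebra ℂ Γ) ρ.asModule := by
  classical
  set A := MonoidAlgebra ℂ G with hA
  haveI : IsSemisimpleRing A := inferInstance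
  -- find a simple submodule on which g₀ acts nontrivially
  have main : ∃ (S : Submodule A A), IsSimpleModule A S ∧
      ∃ x ∈ S, MonoidAlgebra.single g₀ (1:ℂ) • x ≠ x := by
    by_contra hcon
    push_neg at hcon
    have hall := hcon
    have h1 : (1 : A) ∈ (⊤ : Submodule A A) := Submodule.mem_top
    rw [← IsSemisimpleModule.sSup_simples_eq_top A A, sSup_eq_iSup'] at h1
    have : MonoidAlgebra.single g₀ (1:ℂ) • (1 : A) = 1 := by
      refine Submodule.iSup_induction _ (motive := fun y => MonoidAlgebra.single g₀ (1:ℂ) • y = y) h1 ?_ ?_ ?_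
      · rintro ⟨S, hS⟩ x hx
        exact hall S hS x hx
      · exact smul_zero _
      · intro a b ha hb; rw [smul_add, ha, hb]
    rw [smul_eq_mul, mul_one, MonoidAlgebra.one_def] at this
    rcases (MonoidAlgebra.single_inj).mp this with ⟨h1', _⟩ | ⟨h1', _⟩
    · exact hg h1'
    · exact one_ne_zero h1'
  obtain ⟨S, hSsimple, x, hxS, hx⟩ := main
  haveI : IsSimpleModule A ↥S := hSsimple
  haveI : FiniteDimensional ℂ A := FiniteDimensional.of_injective
    ((MonoidAlgebra.coeffLinearEquiv ℂ).trans (Finsupp.linearEquivFunOnFinite ℂ ℂ G)).toLinearMap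
    ((MonoidAlgebra.coeffLinearEquiv ℂ).trans (Finsupp.linearEquivFunOnFinite ℂ ℂ G)).injective
  let ι : ↥S →ₗ[ℂ] A :=
    { toFun := Subtype.val
      map_add' := fun _ _ => rfl
      map_smul' := fun _ _ => rfl }
  haveI : FiniteDimensional ℂ ↥S := FiniteDimensional.of_injective ι Subtype.val_injective
  let σ : Representation ℂ G ↥S :=
    { toFun := fun g =>
        { toFun := fun v => ⟨MonoidAlgebra.single g (1:ℂ) • (v : A), S.smul_mem _ v.2⟩
          map_add' := fun v w => Subtype.ext (by
            show MonoidAlgebra.single g (1:ℂ) • ((v : A) + (w : A))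
              = MonoidAlgebra.single g (1:ℂ) • (v : A) + MonoidAlgebra.single g (1:ℂ) • (w : A)
            rw [smul_add])
          map_smul' := fun c v => Subtype.ext (by
            show MonoidAlgebra.single g (1:ℂ) • ((c • v : ↥S) : A)
              = c • (MonoidAlgebra.single g (1:ℂ) • (v : A))
            rw [Submodule.coe_smul_of_tower, smul_comm]) }
      map_one' := by
        apply LinearMap.ext
        intro v
        apply Subtype.ext
        show MonoidAlgebra.single (1:G) (1:ℂ) • (v : A) = v
        rw [← MonoidAlgebra.one_def, one_smul]
      map_mul' := fun g h => by
        apply LinearMap.ext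
        intro v
        apply Subtype.ext
        show MonoidAlgebra.single (g*h) (1:ℂ) • (v : A)
          = MonoidAlgebra.single g (1:ℂ) • (MonoidAlgebra.single h (1:ℂ) • (v : A))
        rw [← mul_smul, MonoidAlgebra.single_mul_single, mul_one] }
  let xs : ↥S := ⟨x, hxS⟩
  have hσg₀ : σ g₀ ≠ LinearMap.id := by
    intro h
    apply hx
    have h2 : σ g₀ xs = xs := by rw [h]; rfl
    exact congrArg Subtype.val h2
  let N := (σ.asGroupHom).ker
  haveI hNn : N.Normal := MonoidHom.normal_ker _
  refine ⟨N, hNn, ?_, ?_⟩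
  · intro hmem
    apply hσg₀
    have : ((σ.asGroupHom g₀ : (↥S →ₗ[ℂ] ↥S)ˣ) : ↥S →ₗ[ℂ] ↥S) = ((1 : (↥S →ₗ[ℂ] ↥S)ˣ) : ↥S →ₗ[ℂ] ↥S) :=
      congrArg Units.val hmem
    rwa [σ.asGroupHom_apply, Units.val_one] at this
  · intro Γ _ φ
    have hlift : N ≤ (σ.asGroupHom).ker := le_rfl
    let q : G ⧸ N →* (↥S →ₗ[ℂ] ↥S)ˣ := QuotientGroup.lift N σ.asGroupHom hlift
    let n := Module.finrank ℂ ↥S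
    let e : ↥S ≃ₗ[ℂ] (Fin n → ℂ) := (Module.finBasis ℂ ↥S).equivFun
    let conjHom : Module.End ℂ ↥S →* Module.End ℂ (Fin n → ℂ) :=
      { toFun := fun f => e.conj f
        map_one' := e.conj_id
        map_mul' := fun f g => by
          show e.conj (f.comp g) = (e.conj f).comp (e.conj g)
          rw [e.conj_comp] }
    let ρ : Representation ℂ Γ (Fin n → ℂ) :=
      conjHom.comp ((Units.coeHom _).comp (q.comp φ.toMonoidHom))
    have hρ : ∀ g : G, ρ (φ.symm (QuotientGroup.mk g)) = e.conj (σ g) := by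
      intro g
      show conjHom ((q (φ (φ.symm (QuotientGroup.mk g))) : ↥S →ₗ[ℂ] ↥S)) = _
      rw [MulEquiv.apply_symm_apply]
      show e.conj ((q (QuotientGroup.mk g) : ↥S →ₗ[ℂ] ↥S)) = _
      rw [show q (QuotientGroup.mk g) = σ.asGroupHom g from QuotientGroup.lift_mk' N hlift g]
      rw [σ.asGroupHom_apply]
    refine ⟨n, ρ, ?_, ?_⟩
    · intro γ hγ
      have h2 : ((q (φ γ) : ↥S →ₗ[ℂ] ↥S)) = LinearMap.id :=
        e.conj.injective (by rw [e.conj_id]; exact hγ)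
      have h3 : q (φ γ) = 1 := Units.ext (by rw [Units.val_one]; exact h2)
      obtain ⟨g, hgq⟩ := QuotientGroup.mk_surjective (φ γ)
      have hgN : g ∈ N := by
        show σ.asGroupHom g = 1
        rw [← QuotientGroup.lift_mk' N hlift g]
        show q (QuotientGroup.mk g) = 1
        rw [hgq]; exact h3
      have h4 : φ γ = 1 := by rw [← hgq, QuotientGroup.eq_one_iff]; exact hgN
      have h5 : φ γ = φ 1 := by rw [h4, map_one]
      exact φ.injective h5
    · haveI hntS : Nontrivial ↥S := IsSimpleModule.nontrivial A ↥S
      haveI : Nontrivial (Fin n → ℂ) := e.symm.toEquiv.nontrivial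
      apply aux_simple_of_invariant ρ this
      intro p hp
      let p' : Submodule ℂ ↥S := p.comap (e : ↥S →ₗ[ℂ] (Fin n → ℂ))
      have hinv' : ∀ g : G, ∀ v : ↥S, v ∈ p' → σ g v ∈ p' := by
        intro g v hv
        have hργ : ρ (φ.symm (QuotientGroup.mk g)) (e v) ∈ p := hp _ _ hv
        rw [hρ g] at hργ
        show e (σ g v) ∈ p
        have : e.conj (σ g) (e v) = e (σ g v) := by
          rw [e.conj_apply_apply, e.symm_apply_apply]
        rwa [this] at hργ
      let q' : Submodule A ↥S :=
        { carrier := (p' : Set ↥S)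
          add_mem' := fun h1 h2 => p'.add_mem h1 h2
          zero_mem' := p'.zero_mem
          smul_mem' := by
            intro r v hv
            induction r using MonoidAlgebra.induction_linear with
            | zero => simpa using p'.zero_mem
            | add f g hf hg =>
              have : (f + g) • v = f • v + g • v := add_smul (R := A) (M := ↥S) f g v
              rw [this]
              exact p'.add_mem hf hg
            | single g c =>
              have h1 : (MonoidAlgebra.single g c : A) • v = c • σ g v := by
                apply Subtype.ext
                show (MonoidAlgebra.single g c : A) • (v : A)
                  = c • (MonoidAlgebra.single g (1:ℂ) • (v : A))
                rw [← smul_assoc, MonoidAlgebra.smul_single]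
                norm_num
              rw [h1]
              exact p'.smul_mem c (hinv' g v hv) }
      rcases eq_bot_or_eq_top q' with hq | hq
      · left
        ext y
        simp only [Submodule.mem_bot]
        constructor
        · intro hy
          have h1 : e.symm y ∈ p' := by
            show e (e.symm y) ∈ p
            rwa [e.apply_symm_apply]
          have h2 : e.symm y ∈ q' := h1
          rw [hq] at h2
          have h3 : e.symm y = 0 := by simpa using h2
          have := congrArg e h3
          rwa [e.apply_symm_apply, map_zero] at this
        · rintro rfl; exact p.zero_mem
      · right
        ext y
        simp only [Submodule.mem_top, iff_true]
        have h1 : e.symm y ∈ q' := hq ▸ Submodule.mem_top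
        have h2 : e.symm y ∈ p' := h1
        have : e (e.symm y) ∈ p := h2
        rwa [e.apply_symm_apply] at this

theorem aux_key (M : Type) [Field M] (Ω : Type) [Field Ω] [Algebra M Ω] [IsSepClosure M Ω]
    (L : IntermediateField M Ω)
    (H : ∀ K : IntermediateField M Ω, FiniteDimensional M K → IsGalois M K →
      (∃ (n : ℕ) (ρ : Representation ℂ (↥K ≃ₐ[M] ↥K) (Fin n → ℂ)),
        (∀ g, ρ g = LinearMap.id → g = 1) ∧
        IsSimpleModule (MonoidAlgebra ℂ (↥K ≃ₐ[M] ↥K)) ρ.asModule) → K ≤ L)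
    (K : IntermediateField M Ω) (hfd : FiniteDimensional M K) (hgal : IsGalois M K) :
    K ≤ L := by
  haveI := hfd; haveI := hgal
  haveI : Fintype (↥K ≃ₐ[M] ↥K) := AlgEquiv.fintype M ↥K
  set T : IntermediateField M ↥K := L.comap K.val with hT
  have hfix : T.fixingSubgroup = ⊥ := by
    rw [Subgroup.eq_bot_iff_forall]
    intro g₀ hg₀
    by_contra hne
    obtain ⟨N, hNn, hg₀N, hrep⟩ := aux_exists_rep g₀ hne
    haveI := hNn
    set F : IntermediateField M ↥K := IntermediateField.fixedField N with hF
    haveI : IsGalois M ↥F := IsGalois.of_fixedField_normal_subgroup N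
    set F' : IntermediateField M Ω := F.map K.val with hF'
    let algE : ↥F ≃ₐ[M] ↥F' := IntermediateField.equivMap F K.val
    haveI : FiniteDimensional M ↥F' := LinearEquiv.finiteDimensional algE.toLinearEquiv
    haveI : Normal M ↥F' := Normal.of_algEquiv algE
    haveI : IsGalois M ↥F' :=
      { to_isSeparable := Algebra.isSeparable_tower_bot_of_isSeparable M ↥F' Ω }
    let φ : (↥F' ≃ₐ[M] ↥F') ≃* (↥K ≃ₐ[M] ↥K) ⧸ N :=
      (AlgEquiv.autCongr algE.symm).trans (IsGalois.normalAutEquivQuotient N).symm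
    have hF'L : F' ≤ L := H F' inferInstance inferInstance (hrep _ φ)
    have hFT : F ≤ T := by
      intro y hy
      show K.val y ∈ L
      exact hF'L ⟨y, hy, rfl⟩
    apply hg₀N
    rw [← IntermediateField.fixingSubgroup_fixedField N]
    rw [IntermediateField.fixingSubgroup, mem_fixingSubgroup_iff] at hg₀ ⊢
    intro y hy
    exact hg₀ y (hFT hy)
  have hTtop : T = ⊤ := by
    have h1 := IsGalois.fixedField_fixingSubgroup T
    rw [hfix] at h1
    rw [← h1, eq_top_iff]
    intro y _
    rintro ⟨g, hg⟩
    rw [Subgroup.mem_bot] at hg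
    subst hg
    exact one_smul _ y
  intro x hx
  have hmem : (⟨x, hx⟩ : ↥K) ∈ T := hTtop ▸ IntermediateField.mem_top
  exact hmem

theorem stmt4 (M : Type) [Field M] (Ω : Type) [Field Ω] [Algebra M Ω] [IsSepClosure M Ω]
    (L : IntermediateField M Ω)
    (H : ∀ K : IntermediateField M Ω, FiniteDimensional M K → IsGalois M K →
      (∃ (n : ℕ) (ρ : Representation ℂ (↥K ≃ₐ[M] ↥K) (Fin n → ℂ)),
        (∀ g, ρ g = LinearMap.id → g = 1) ∧
        IsSimpleModule (MonoidAlgebra ℂ (↥K ≃ₐ[M] ↥K)) ρ.asModule) → K ≤ L) :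
    L = ⊤ := by
  rw [eq_top_iff]
  intro x _
  haveI : IsGalois M Ω := inferInstance
  have hint : IsIntegral M x := Algebra.IsIntegral.isIntegral x
  haveI : FiniteDimensional M (IntermediateField.adjoin M {x}) :=
    IntermediateField.adjoin.finiteDimensional hint
  set K : IntermediateField M Ω := IntermediateField.normalClosure M (IntermediateField.adjoin M {x}) Ω with hK
  haveI : FiniteDimensional M ↥K := normalClosure.is_finiteDimensional M _ Ω
  haveI : IsGalois M ↥K :=
    { to_isSeparable := Algebra.isSeparable_tower_bot_of_isSeparable M ↥K Ω
      to_normal := normalClosure.normal M _ Ω }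
  have hKL : K ≤ L := aux_key M Ω L H K inferInstance inferInstance
  exact hKL (IntermediateField.le_normalClosure _
    (IntermediateField.mem_adjoin_simple_self M x))
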